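/- If τ' ≥ τ with τ, τ' ∈ (0,1), then for any value function V and λ ∈ [0,1), (T_{τ',λ} V)(s) ≥ (T_{τ,λ} V)(s) for all states s, where T_{τ,λ} V = (1−λ) Σ_{n=1}^∞ λ^{n−1} (T_τ)^n V. Consequently the fixed points satisfy V*_{τ',λ}(s) ≥ V*_{τ,λ}(s) for all s. -/
import Mathlib


open Finset

lemma aux_f_diff (t x y : ℝ) (hxy : x ≤ y) :
    min t (1-t) * (y - x) ≤ (t * max y 0 + (1-t) * min y 0) - (t * max x 0 + (1-t) * min x 0) ∧
    (t * max y 0 + (1-t) * min y 0) - (t * max x 0 + (1-t) * min x 0) ≤ max t (1-t) * (y - x) := by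
  have hu0 : 0 ≤ max y 0 - max x 0 := sub_nonneg.2 (max_le_max hxy le_rfl)
  have hv0 : 0 ≤ min y 0 - min x 0 := sub_nonneg.2 (min_le_min hxy le_rfl)
  have h1 : max y 0 + min y 0 = y + 0 := max_add_min y 0
  have h2 : max x 0 + min x 0 = x + 0 := max_add_min x 0
  constructor <;>
  nlinarith [min_le_left t (1-t), min_le_right t (1-t), le_max_left t (1-t), le_max_right t (1-t)]

lemma aux_f_tau (t t' x : ℝ) (h : t ≤ t') :
    t * max x 0 + (1-t) * min x 0 ≤ t' * max x 0 + (1-t') * min x 0 := by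
  nlinarith [le_max_right x 0, min_le_right x 0]

lemma aux_sum_bound {S A : Type*} [Fintype S] [Fintype A]
    (pol : S → A → ℝ) (P : S → A → S → ℝ)
    (hpol0 : ∀ s a, 0 ≤ pol s a) (hpol1 : ∀ s, ∑ a, pol s a = 1)
    (hP0 : ∀ s a s', 0 ≤ P s a s') (hP1 : ∀ s a, ∑ s', P s a s' = 1)
    (s : S) (g h : A → S → ℝ) (c : ℝ) (hgh : ∀ a s', g a s' ≤ h a s' + c) :
    ∑ a, ∑ s', pol s a * P s a s' * g a s' ≤
      (∑ a, ∑ s', pol s a * P s a s' * h a s') + c := by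
  have hone : ∑ a, ∑ s', pol s a * P s a s' * c = c := by
    have : ∀ a, ∑ s', pol s a * P s a s' * c = pol s a * c := by
      intro a
      rw [show (∑ s', pol s a * P s a s' * c) = (∑ s', P s a s') * (pol s a * c) by
        rw [Finset.sum_mul]; exact Finset.sum_congr rfl fun s' _ => by ring, hP1, one_mul]
    rw [Finset.sum_congr rfl fun a _ => this a, ← Finset.sum_mul, hpol1, one_mul]
  calc ∑ a, ∑ s', pol s a * P s a s' * g a s'
      ≤ ∑ a, ∑ s', (pol s a * P s a s' * h a s' + pol s a * P s a s' * c) := by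
        refine Finset.sum_le_sum fun a _ => Finset.sum_le_sum fun s' _ => ?_
        have := mul_le_mul_of_nonneg_left (hgh a s')
          (mul_nonneg (hpol0 s a) (hP0 s a s'))
        linarith [this]
    _ = (∑ a, ∑ s', pol s a * P s a s' * h a s') + c := by
        simp_rw [Finset.sum_add_distrib]; rw [hone]

lemma aux_step_mono {S A : Type*} [Fintype S] [Fintype A]
    (pol : S → A → ℝ) (P : S → A → S → ℝ) (R : S → A → S → ℝ) (γ α σ : ℝ)
    (hpol0 : ∀ s a, 0 ≤ pol s a) (hpol1 : ∀ s, ∑ a, pol s a = 1)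
    (hP0 : ∀ s a s', 0 ≤ P s a s') (hP1 : ∀ s a, ∑ s', P s a s' = 1)
    (hγ0 : 0 ≤ γ) (hσ0 : 0 ≤ σ) (hσ1 : σ ≤ 1) (hα0 : 0 ≤ α)
    (hM : 2 * α * max σ (1-σ) ≤ 1)
    (T : (S → ℝ) → (S → ℝ))
    (hT : ∀ V s, T V s = V s + 2 * α * ∑ a, ∑ s', pol s a * P s a s' *
        (σ * max (R s a s' + γ * V s' - V s) 0
          + (1 - σ) * min (R s a s' + γ * V s' - V s) 0))
    (V W : S → ℝ) (hVW : ∀ s, V s ≤ W s) : ∀ s, T V s ≤ T W s := by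
  intro s
  set Mσ := max σ (1-σ) with hMσ
  have hMσ0 : 0 ≤ Mσ := le_trans hσ0 (le_max_left _ _)
  have hΔ0 : 0 ≤ W s - V s := sub_nonneg.2 (hVW s)
  have hterm : ∀ a s',
      σ * max (R s a s' + γ * V s' - V s) 0 + (1 - σ) * min (R s a s' + γ * V s' - V s) 0
      ≤ (σ * max (R s a s' + γ * W s' - W s) 0 + (1 - σ) * min (R s a s' + γ * W s' - W s) 0)
        + Mσ * (W s - V s) := by
    intro a s'
    set x := R s a s' + γ * V s' - V s
    set y := R s a s' + γ * W s' - W s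
    have hΔ'0 : 0 ≤ W s' - V s' := sub_nonneg.2 (hVW s')
    rcases le_total x y with hxy | hxy
    · have := (aux_f_diff σ x y hxy).1
      have hm0 : 0 ≤ min σ (1-σ) := le_min hσ0 (by linarith)
      nlinarith [mul_nonneg hm0 (sub_nonneg.2 hxy), mul_nonneg hMσ0 hΔ0]
    · have := (aux_f_diff σ y x hxy).2
      have hxyle : x - y ≤ W s - V s := by
        have : x - y = (W s - V s) - γ * (W s' - V s') := by simp only [x, y]; ring
        nlinarith [mul_nonneg hγ0 hΔ'0]
      nlinarith [mul_le_mul_of_nonneg_left hxyle hMσ0]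
  have hsum := aux_sum_bound pol P hpol0 hpol1 hP0 hP1 s _ _ (Mσ * (W s - V s)) hterm
  rw [hT V s, hT W s]
  have h2α : 0 ≤ 2 * α := by linarith
  have := mul_le_mul_of_nonneg_left hsum h2α
  nlinarith [mul_nonneg (mul_nonneg h2α hMσ0) hΔ0]

lemma aux_step_shift {S A : Type*} [Fintype S] [Fintype A]
    (pol : S → A → ℝ) (P : S → A → S → ℝ) (R : S → A → S → ℝ) (γ α σ : ℝ)
    (hpol0 : ∀ s a, 0 ≤ pol s a) (hpol1 : ∀ s, ∑ a, pol s a = 1)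
    (hP0 : ∀ s a s', 0 ≤ P s a s') (hP1 : ∀ s a, ∑ s', P s a s' = 1)
    (hγ1 : γ ≤ 1) (hα0 : 0 ≤ α)
    (T : (S → ℝ) → (S → ℝ))
    (hT : ∀ V s, T V s = V s + 2 * α * ∑ a, ∑ s', pol s a * P s a s' *
        (σ * max (R s a s' + γ * V s' - V s) 0
          + (1 - σ) * min (R s a s' + γ * V s' - V s) 0))
    (V : S → ℝ) (c : ℝ) (hc : 0 ≤ c) (s : S) :
    T (fun u => V u + c) s ≤ T V s + (1 - 2 * α * (min σ (1-σ)) * (1 - γ)) * c := by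
  set m := min σ (1-σ) with hm
  have hterm : ∀ a s',
      σ * max (R s a s' + γ * (V s' + c) - (V s + c)) 0
        + (1 - σ) * min (R s a s' + γ * (V s' + c) - (V s + c)) 0
      ≤ (σ * max (R s a s' + γ * V s' - V s) 0 + (1 - σ) * min (R s a s' + γ * V s' - V s) 0)
        + (- (m * ((1 - γ) * c))) := by
    intro a s'
    set y := R s a s' + γ * V s' - V s with hy
    have hxval : R s a s' + γ * (V s' + c) - (V s + c) = y - (1 - γ) * c := by
      simp only [hy]; ring
    rw [hxval]
    have hxy : y - (1 - γ) * c ≤ y := by nlinarith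
    have := (aux_f_diff σ (y - (1 - γ) * c) y hxy).1
    nlinarith
  have hsum := aux_sum_bound pol P hpol0 hpol1 hP0 hP1 s _ _ (- (m * ((1 - γ) * c))) hterm
  rw [hT _ s, hT V s]
  have h2α : 0 ≤ 2 * α := by linarith
  have := mul_le_mul_of_nonneg_left hsum h2α
  nlinarith

/-- If `τ' ≥ τ` then `(T_{τ',λ} V)(s) ≥ (T_{τ,λ} V)(s)` for every
value function `V` and state `s`, and consequently the fixed points satisfy
`V*_{τ',λ}(s) ≥ V*_{τ,λ}(s)` for all `s`. -/
theorem multistep_monotone_in_tau {S A : Type*}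
    [Fintype S] [Nonempty S] [Fintype A] [Nonempty A]
    (pol : S → A → ℝ) (P : S → A → S → ℝ) (R : S → A → S → ℝ) (γ α τ τ' lam : ℝ)
    (hpol0 : ∀ s a, 0 ≤ pol s a) (hpol1 : ∀ s, ∑ a, pol s a = 1)
    (hP0 : ∀ s a s', 0 ≤ P s a s') (hP1 : ∀ s a, ∑ s', P s a s' = 1)
    (hγ0 : 0 ≤ γ) (hγ1 : γ < 1)
    (hτ0 : 0 < τ) (hτ1 : τ < 1) (hτ'0 : 0 < τ') (hτ'1 : τ' < 1) (hττ' : τ ≤ τ')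
    (hα0 : 0 < α) (hα : 2 * α * max τ' (1 - τ) ≤ 1)
    (hlam0 : 0 ≤ lam) (hlam1 : lam < 1)
    (Tτ Tτ' Tlam Tlam' : (S → ℝ) → (S → ℝ))
    (hTτ : ∀ V s, Tτ V s =
      V s + 2 * α * ∑ a, ∑ s', pol s a * P s a s' *
        (τ * max (R s a s' + γ * V s' - V s) 0
          + (1 - τ) * min (R s a s' + γ * V s' - V s) 0))
    (hTτ' : ∀ V s, Tτ' V s =
      V s + 2 * α * ∑ a, ∑ s', pol s a * P s a s' *
        (τ' * max (R s a s' + γ * V s' - V s) 0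
          + (1 - τ') * min (R s a s' + γ * V s' - V s) 0))
    (hsum : ∀ (V : S → ℝ) (s : S), Summable (fun n : ℕ => lam ^ n * (Tτ^[n + 1] V s)))
    (hsum' : ∀ (V : S → ℝ) (s : S), Summable (fun n : ℕ => lam ^ n * (Tτ'^[n + 1] V s)))
    (hTlam : ∀ V s, Tlam V s = (1 - lam) * ∑' n : ℕ, lam ^ n * (Tτ^[n + 1] V s))
    (hTlam' : ∀ V s, Tlam' V s = (1 - lam) * ∑' n : ℕ, lam ^ n * (Tτ'^[n + 1] V s))
    (Vlam Vlam' : S → ℝ) (hfix : Tlam Vlam = Vlam) (hfix' : Tlam' Vlam' = Vlam') :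
    (∀ (V : S → ℝ) (s : S), Tlam V s ≤ Tlam' V s) ∧ (∀ s, Vlam s ≤ Vlam' s) := by
  have hα0' : (0:ℝ) ≤ α := le_of_lt hα0
  have h2α : (0:ℝ) ≤ 2 * α := by linarith
  have h1lam : (0:ℝ) ≤ 1 - lam := by linarith
  -- step-size bounds for both operators
  have hMτ : 2 * α * max τ (1-τ) ≤ 1 :=
    le_trans (mul_le_mul_of_nonneg_left (max_le_max hττ' le_rfl) h2α) hα
  have hMτ' : 2 * α * max τ' (1-τ') ≤ 1 :=
    le_trans (mul_le_mul_of_nonneg_left (max_le_max le_rfl (by linarith)) h2α) hα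
  -- pointwise comparison of the one-step operators
  have hcomp : ∀ (V : S → ℝ) (s : S), Tτ V s ≤ Tτ' V s := by
    intro V s
    rw [hTτ V s, hTτ' V s]
    have := Finset.sum_le_sum (f := fun a => ∑ s', pol s a * P s a s' *
        (τ * max (R s a s' + γ * V s' - V s) 0 + (1 - τ) * min (R s a s' + γ * V s' - V s) 0))
      (g := fun a => ∑ s', pol s a * P s a s' *
        (τ' * max (R s a s' + γ * V s' - V s) 0 + (1 - τ') * min (R s a s' + γ * V s' - V s) 0))
      (s := Finset.univ)
      (fun a _ => Finset.sum_le_sum fun s' _ =>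
        mul_le_mul_of_nonneg_left (aux_f_tau τ τ' _ hττ')
          (mul_nonneg (hpol0 s a) (hP0 s a s')))
    have := mul_le_mul_of_nonneg_left this h2α
    linarith
  -- monotonicity of the one-step operators
  have hmonoτ' : ∀ (V W : S → ℝ), (∀ s, V s ≤ W s) → ∀ s, Tτ' V s ≤ Tτ' W s :=
    fun V W hVW => aux_step_mono pol P R γ α τ' hpol0 hpol1 hP0 hP1 hγ0
      (le_of_lt hτ'0) (le_of_lt hτ'1) hα0' hMτ' Tτ' hTτ' V W hVW
  -- iterate comparison
  have hiter_le : ∀ (n : ℕ) (V : S → ℝ) (s : S), Tτ^[n] V s ≤ Tτ'^[n] V s := by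
    intro n
    induction n with
    | zero => intro V s; simp
    | succ n ih =>
      intro V s
      rw [Function.iterate_succ_apply', Function.iterate_succ_apply']
      exact le_trans (hcomp _ s) (hmonoτ' _ _ (fun u => ih V u) s)
  -- first conclusion
  have part1 : ∀ (V : S → ℝ) (s : S), Tlam V s ≤ Tlam' V s := by
    intro V s
    rw [hTlam V s, hTlam' V s]
    refine mul_le_mul_of_nonneg_left (Summable.tsum_le_tsum (fun n => ?_) (hsum V s) (hsum' V s)) h1lam
    exact mul_le_mul_of_nonneg_left (hiter_le (n+1) V s) (pow_nonneg hlam0 n)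
  refine ⟨part1, ?_⟩
  -- iterate monotonicity for Tτ'
  have hitermono : ∀ (n : ℕ) (V W : S → ℝ), (∀ s, V s ≤ W s) →
      ∀ s, Tτ'^[n] V s ≤ Tτ'^[n] W s := by
    intro n
    induction n with
    | zero => intro V W hVW s; exact hVW s
    | succ n ih =>
      intro V W hVW s
      rw [Function.iterate_succ_apply', Function.iterate_succ_apply']
      exact hmonoτ' _ _ (fun u => ih V W hVW u) s
  -- the contraction factor for constant shifts
  set β : ℝ := 1 - 2 * α * (min τ' (1-τ')) * (1 - γ) with hβdef
  have hm'pos : 0 < min τ' (1-τ') := lt_min hτ'0 (by linarith)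
  have hβ1 : β < 1 := by
    have : 0 < 2 * α * (min τ' (1-τ')) * (1 - γ) :=
      mul_pos (mul_pos (by linarith) hm'pos) (by linarith)
    simp only [hβdef]; linarith
  have hβ0 : 0 ≤ β := by
    have h1 : min τ' (1-τ') ≤ max τ' (1-τ) := le_trans (min_le_left _ _) (le_max_left _ _)
    have h2 : 2 * α * (min τ' (1-τ')) ≤ 2 * α * max τ' (1-τ) :=
      mul_le_mul_of_nonneg_left h1 h2α
    have h3 : 0 ≤ 2 * α * (min τ' (1-τ')) := mul_nonneg h2α (le_of_lt hm'pos)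
    simp only [hβdef]
    nlinarith
  have hshift : ∀ (V : S → ℝ) (c : ℝ), 0 ≤ c → ∀ s,
      Tτ' (fun u => V u + c) s ≤ Tτ' V s + β * c :=
    fun V c hc s => aux_step_shift pol P R γ α τ' hpol0 hpol1 hP0 hP1
      (le_of_lt hγ1) hα0' Tτ' hTτ' V c hc s
  have hshift_iter : ∀ (n : ℕ) (V : S → ℝ) (c : ℝ), 0 ≤ c → ∀ s,
      Tτ'^[n] (fun u => V u + c) s ≤ Tτ'^[n] V s + β ^ n * c := by
    intro n
    induction n with
    | zero => intro V c hc s; simp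
    | succ n ih =>
      intro V c hc s
      rw [Function.iterate_succ_apply, Function.iterate_succ_apply]
      calc Tτ'^[n] (Tτ' (fun u => V u + c)) s
          ≤ Tτ'^[n] (fun u => Tτ' V u + β * c) s :=
            hitermono n _ _ (fun u => hshift V c hc u) s
        _ ≤ Tτ'^[n] (Tτ' V) s + β ^ n * (β * c) :=
            ih (Tτ' V) (β * c) (mul_nonneg hβ0 hc) s
        _ = Tτ'^[n] (Tτ' V) s + β ^ (n+1) * c := by ring
  -- the gap
  obtain ⟨s₀⟩ := ‹Nonempty S›
  have hne : (Finset.univ : Finset S).Nonempty := ⟨s₀, Finset.mem_univ s₀⟩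
  set c0 : ℝ := Finset.sup' Finset.univ hne (fun s => Vlam s - Vlam' s) with hc0def
  set cp : ℝ := max c0 0 with hcpdef
  have hcp0 : 0 ≤ cp := le_max_right _ _
  have hub : ∀ s, Vlam s ≤ Vlam' s + cp := by
    intro s
    have h1 : Vlam s - Vlam' s ≤ c0 :=
      Finset.le_sup' (fun s => Vlam s - Vlam' s) (Finset.mem_univ s)
    have h2 : c0 ≤ cp := le_max_left _ _
    linarith
  -- geometric sum facts
  have hlb0 : 0 ≤ lam * β := mul_nonneg hlam0 hβ0
  have hlb1 : lam * β < 1 := by nlinarith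
  have hgeosum : Summable (fun n : ℕ => lam ^ n * (β ^ (n+1) * cp)) := by
    have : (fun n : ℕ => lam ^ n * (β ^ (n+1) * cp)) = fun n => (lam * β) ^ n * (β * cp) := by
      funext n; rw [mul_pow, pow_succ]; ring
    rw [this]
    exact (summable_geometric_of_lt_one hlb0 hlb1).mul_right _
  have hgeo : ∑' n : ℕ, lam ^ n * (β ^ (n+1) * cp) = (1 - lam * β)⁻¹ * (β * cp) := by
    have heq : ∀ n : ℕ, lam ^ n * (β ^ (n+1) * cp) = (lam * β) ^ n * (β * cp) := by
      intro n; rw [mul_pow, pow_succ]; ring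
    rw [tsum_congr heq, tsum_mul_right, tsum_geometric_of_lt_one hlb0 hlb1]
  -- key estimate
  have hkey : ∀ s, Vlam s ≤ Vlam' s + (1 - lam) * ((1 - lam * β)⁻¹ * (β * cp)) := by
    intro s
    have step1 : Vlam s ≤ Tlam' Vlam s := by
      calc Vlam s = Tlam Vlam s := (congrFun hfix s).symm
        _ ≤ Tlam' Vlam s := part1 Vlam s
    have step2 : Tlam' Vlam s ≤ Tlam' (fun u => Vlam' u + cp) s := by
      rw [hTlam' Vlam s, hTlam' (fun u => Vlam' u + cp) s]
      refine mul_le_mul_of_nonneg_left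
        (Summable.tsum_le_tsum (fun n => ?_) (hsum' Vlam s) (hsum' _ s)) h1lam
      exact mul_le_mul_of_nonneg_left (hitermono (n+1) Vlam _ hub s) (pow_nonneg hlam0 n)
    have step3 : Tlam' (fun u => Vlam' u + cp) s ≤
        Vlam' s + (1 - lam) * ((1 - lam * β)⁻¹ * (β * cp)) := by
      rw [hTlam' (fun u => Vlam' u + cp) s]
      have h1 : ∑' n : ℕ, lam ^ n * (Tτ'^[n+1] (fun u => Vlam' u + cp) s)
          ≤ ∑' n : ℕ, (lam ^ n * (Tτ'^[n+1] Vlam' s) + lam ^ n * (β ^ (n+1) * cp)) := by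
        refine Summable.tsum_le_tsum (fun n => ?_) (hsum' _ s) ((hsum' Vlam' s).add hgeosum)
        have := hshift_iter (n+1) Vlam' cp hcp0 s
        nlinarith [pow_nonneg hlam0 n]
      rw [Summable.tsum_add (hsum' Vlam' s) hgeosum, hgeo] at h1
      have h2 := mul_le_mul_of_nonneg_left h1 h1lam
      have h3 : Tlam' Vlam' s = Vlam' s := congrFun hfix' s
      rw [hTlam' Vlam' s] at h3
      nlinarith
    linarith
  -- conclude
  have hc0le : c0 ≤ (1 - lam) * ((1 - lam * β)⁻¹ * (β * cp)) :=
    Finset.sup'_le hne _ (fun s _ => by linarith [hkey s])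
  have hc0np : c0 ≤ 0 := by
    by_contra hpos
    push_neg at hpos
    have hcpc0 : cp = c0 := max_eq_left (le_of_lt hpos)
    rw [hcpc0] at hc0le
    have hD : 0 < 1 - lam * β := by linarith
    have heq : (1 - lam) * ((1 - lam * β)⁻¹ * (β * c0)) =
        ((1 - lam) * (β * c0)) / (1 - lam * β) := by
      field_simp
    rw [heq, le_div_iff₀ hD] at hc0le
    have hfin : 0 < c0 * (1 - β) := mul_pos hpos (by linarith)
    ring_nf at hc0le hfin
    linarith only [hc0le, hfin]
  intro s
  have h1 : Vlam s - Vlam' s ≤ c0 :=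
    Finset.le_sup' (fun s => Vlam s - Vlam' s) (Finset.mem_univ s)
  linarith
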